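/- Let f : ℝ → ℝ be 2π-periodic with continuous derivative f_x satisfying ‖f_x‖₂ < ∞, and let K_p > 0. Let e : ℝ × [0,∞) → ℝ be continuously differentiable, 2π-periodic in x, and satisfy the closed-loop error dynamics e_t(x,t) + ∂_x( e(x,t) · (−V^e(x,t)) ) = −K_p e(x,t) for all x and t ≥ 0, where V^e(·,t) = f * e(·,t). If γ > 0 is such that ‖e(·,0)‖₂ < γ and 2K_p > γ‖f_x‖₂, then ‖e(·,t)‖₂² ≤ ‖e(·,0)‖₂² · exp(−(2K_p − γ‖f_x‖₂) t) for all t ≥ 0; in particular ‖e(·,t)‖₂ → 0 as t → ∞. -/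

import Mathlib

open Real MeasureTheory Filter intervalIntegral

/-- Circular convolution of two (2π-periodic) functions on the unit circle
`S = [-π, π]`: `(g * h)(x) = ∫_{-π}^{π} g (x - y) h y dy`. -/
noncomputable def circConv (g h : ℝ → ℝ) (x : ℝ) : ℝ :=
  ∫ y in (-Real.pi)..Real.pi, g (x - y) * h y

/-- Cauchy–Schwarz for interval integrals of continuous functions. -/
lemma cs_interval {u v : ℝ → ℝ} (hu : Continuous u) (hv : Continuous v) {a b : ℝ}
    (hab : a ≤ b) :
    (∫ y in a..b, u y * v y) ≤
      Real.sqrt (∫ y in a..b, u y ^ 2) * Real.sqrt (∫ y in a..b, v y ^ 2) := by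
  set A := ∫ y in a..b, u y ^ 2 with hA
  set B := ∫ y in a..b, u y * v y with hB
  set C := ∫ y in a..b, v y ^ 2 with hC
  have hAnn : 0 ≤ A := intervalIntegral.integral_nonneg hab (fun x _ => by positivity)
  have hCnn : 0 ≤ C := intervalIntegral.integral_nonneg hab (fun x _ => by positivity)
  have key : ∀ l : ℝ, 0 ≤ C * (l * l) + (2 * B) * l + A := by
    intro l
    have h1 : (0:ℝ) ≤ ∫ y in a..b, (u y + l * v y) ^ 2 :=
      intervalIntegral.integral_nonneg hab (fun x _ => by positivity)
    have h2 : (∫ y in a..b, (u y + l * v y) ^ 2) = A + (2 * B) * l + C * (l * l) := by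
      have e1 : ∀ y : ℝ, (u y + l * v y) ^ 2
          = u y ^ 2 + (2 * l) * (u y * v y) + (l * l) * (v y ^ 2) := by intro y; ring
      simp_rw [e1]
      rw [intervalIntegral.integral_add, intervalIntegral.integral_add,
        intervalIntegral.integral_const_mul, intervalIntegral.integral_const_mul]
      · ring
      · exact (hu.pow 2).intervalIntegrable a b
      · exact ((continuous_const.mul (hu.mul hv))).intervalIntegrable a b
      · exact ((hu.pow 2).add ((continuous_const.mul (hu.mul hv)))).intervalIntegrable a b
      · exact ((continuous_const.mul (hv.pow 2))).intervalIntegrable a b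
    linarith [h1, h2.symm.le, h2.le]
  have hdisc := discrim_le_zero key
  rw [discrim] at hdisc
  have hB2 : B ^ 2 ≤ A * C := by nlinarith
  calc B ≤ |B| := le_abs_self B
    _ = Real.sqrt (B ^ 2) := (Real.sqrt_sq_eq_abs B).symm
    _ ≤ Real.sqrt (A * C) := Real.sqrt_le_sqrt hB2
    _ = Real.sqrt A * Real.sqrt C := by rw [Real.sqrt_mul hAnn]

/-- Continuity of the circular convolution in `x`. -/
lemma circConv_continuous {g h : ℝ → ℝ} (hg : Continuous g) (hh : Continuous h) :
    Continuous (circConv g h) := by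
  have : Continuous fun p : ℝ × ℝ => g (p.1 - p.2) * h p.2 :=
    (hg.comp (continuous_fst.sub continuous_snd)).mul (hh.comp continuous_snd)
  exact intervalIntegral.continuous_parametric_intervalIntegral_of_continuous'
    (f := fun x y => g (x - y) * h y) this _ _

/-- Derivative of the circular convolution in `x`. -/
lemma circConv_hasDerivAt {g g' h : ℝ → ℝ} (hg : ∀ x, HasDerivAt g (g' x) x)
    (hg' : Continuous g') (hh : Continuous h) (x₀ : ℝ) :
    HasDerivAt (circConv g h) (circConv g' h x₀) x₀ := by
  have hgc : Continuous g := continuous_iff_continuousAt.mpr fun x => (hg x).continuousAt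
  obtain ⟨M, hM⟩ : ∃ M, ∀ z ∈ Set.Icc (x₀ - 1 - π) (x₀ + 1 + π), ‖g' z‖ ≤ M :=
    isCompact_Icc.exists_bound_of_continuousOn hg'.continuousOn
  have key := intervalIntegral.hasDerivAt_integral_of_dominated_loc_of_deriv_le
    (F := fun x y => g (x - y) * h y) (F' := fun x y => g' (x - y) * h y)
    (x₀ := x₀) (a := -π) (b := π) (μ := volume)
    (bound := fun y => M * |h y|) (Metric.ball_mem_nhds x₀ one_pos)
    (Filter.Eventually.of_forall fun x =>
      ((hgc.comp (continuous_const.sub continuous_id)).mul hh).aestronglyMeasurable)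
    (((hgc.comp (continuous_const.sub continuous_id)).mul hh).intervalIntegrable _ _)
    ((hg'.comp (continuous_const.sub continuous_id)).mul hh).aestronglyMeasurable
    (Filter.Eventually.of_forall fun y hy x hx => by
      have hy' : y ∈ Set.Icc (-π) π := by
        have := Real.pi_pos
        rcases Set.mem_uIoc.mp hy with h1 | h1
        · exact ⟨h1.1.le, h1.2⟩
        · exact absurd (h1.1.trans_le h1.2) (by linarith)
      have hxd : |x - x₀| < 1 := by simpa [Real.dist_eq] using Metric.mem_ball.mp hx
      have hz : x - y ∈ Set.Icc (x₀ - 1 - π) (x₀ + 1 + π) := by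
        rcases abs_lt.mp hxd with ⟨h1, h2⟩
        rcases hy' with ⟨h3, h4⟩
        constructor <;> linarith
      calc ‖g' (x - y) * h y‖ = ‖g' (x - y)‖ * |h y| := by
            rw [norm_mul]; rfl
        _ ≤ M * |h y| := by
            exact mul_le_mul_of_nonneg_right (hM _ hz) (abs_nonneg _))
    ((continuous_const.mul hh.abs).intervalIntegrable _ _)
    (Filter.Eventually.of_forall fun y _ x _ => by
      have h1 : HasDerivAt (fun x : ℝ => x - y) 1 x := by
        simpa using (hasDerivAt_id x).sub_const y
      have h2 : HasDerivAt (fun x => g (x - y)) (g' (x - y) * 1) x :=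
        (hg (x - y)).comp x h1
      simpa using h2.mul_const (h y))
  exact key.2

/-- `f` periodic with derivative `f'` everywhere implies `f'` periodic. -/
lemma deriv_periodic {g g' : ℝ → ℝ} (hg : ∀ x, HasDerivAt g (g' x) x)
    (hper : Function.Periodic g (2 * π)) : Function.Periodic g' (2 * π) := by
  intro x
  have h1 : HasDerivAt (fun z => g (z + 2 * π)) (g' (x + 2 * π) * 1) x :=
    (hg (x + 2 * π)).comp x (by simpa using (hasDerivAt_id x).add_const (2 * π))
  have h2 : (fun z => g (z + 2 * π)) = g := funext fun z => hper z
  rw [h2, mul_one] at h1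
  exact h1.unique (hg x)

/-- Pointwise bound for the circular convolution. -/
lemma circConv_bound {g h : ℝ → ℝ} (hg : Continuous g)
    (hgper : Function.Periodic g (2 * π)) (hh : Continuous h) (x : ℝ) :
    |circConv g h x| ≤
      Real.sqrt (∫ y in (-π)..π, g y ^ 2) * Real.sqrt (∫ y in (-π)..π, h y ^ 2) := by
  have hπ : (-π : ℝ) ≤ π := by have := Real.pi_pos; linarith
  have hshift : ∀ u : ℝ → ℝ, (∫ y in (-π)..π, u (x - y) ^ 2)
      = ∫ y in (x - π)..(x + π), u y ^ 2 := by
    intro u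
    have := intervalIntegral.integral_comp_sub_left (a := -π) (b := π) (fun z => u z ^ 2) x
    rwa [show x - -π = x + π by ring] at this
  have hper2 : Function.Periodic (fun z => g z ^ 2) (2 * π) := fun z => by simp [hgper z]
  have hkey : (∫ y in (-π)..π, g (x - y) ^ 2) = ∫ y in (-π)..π, g y ^ 2 := by
    rw [hshift g]
    have := hper2.intervalIntegral_add_eq (x - π) (-π)
    have h1 : x - π + 2 * π = x + π := by ring
    have h2 : -π + 2 * π = π := by ring
    rwa [h1, h2] at this
  have hcs1 : (∫ y in (-π)..π, g (x - y) * h y) ≤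
      Real.sqrt (∫ y in (-π)..π, g (x - y) ^ 2) * Real.sqrt (∫ y in (-π)..π, h y ^ 2) :=
    cs_interval (hg.comp (continuous_const.sub continuous_id)) hh hπ
  have hcs2 : (∫ y in (-π)..π, (-g (x - y)) * h y) ≤
      Real.sqrt (∫ y in (-π)..π, (-g (x - y)) ^ 2) * Real.sqrt (∫ y in (-π)..π, h y ^ 2) :=
    cs_interval ((hg.comp (continuous_const.sub continuous_id)).neg) hh hπ
  have hneg : (∫ y in (-π)..π, (-g (x - y)) * h y) = -circConv g h x := by
    simp [circConv, ← intervalIntegral.integral_neg]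
  have hnegsq : (∫ y in (-π)..π, (-g (x - y)) ^ 2) = ∫ y in (-π)..π, g (x - y) ^ 2 := by
    simp
  rw [hneg, hnegsq] at hcs2
  rw [hkey] at hcs1 hcs2
  rw [abs_le]
  exact ⟨by linarith, by simpa [circConv] using hcs1⟩

/-- Lyapunov convergence of the closed-loop error dynamics.
If the error `e` satisfies `e_t + ∂_x (e · (−V^e)) = −K_p e` with `V^e = f * e`,
`‖e(·,0)‖₂ < γ` and `2 K_p > γ ‖f_x‖₂`, then
`‖e(·,t)‖₂² ≤ ‖e(·,0)‖₂² exp(−(2K_p − γ‖f_x‖₂) t)` and `‖e(·,t)‖₂ → 0`. -/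

theorem stmt0 (f f' : ℝ → ℝ) (e : ℝ → ℝ → ℝ) (Kp γ : ℝ)
    (hf_per : Function.Periodic f (2 * π))
    (hf' : ∀ x, HasDerivAt f (f' x) x)
    (hf'_cont : Continuous f')
    (hKp : 0 < Kp) (hγ : 0 < γ)
    (he_smooth : ContDiff ℝ 1 fun p : ℝ × ℝ => e p.1 p.2)
    (he_per : ∀ x t : ℝ, e (x + 2 * π) t = e x t)
    (hpde : ∀ x t : ℝ, 0 ≤ t →
      deriv (fun s => e x s) t
          + deriv (fun z => e z t * (-(circConv f (fun y => e y t) z))) x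
        = -Kp * e x t)
    (hinit : Real.sqrt (∫ x in (-π)..π, (e x 0) ^ 2) < γ)
    (hgain : γ * Real.sqrt (∫ x in (-π)..π, (f' x) ^ 2) < 2 * Kp) :
    (∀ t : ℝ, 0 ≤ t →
        (∫ x in (-π)..π, (e x t) ^ 2)
          ≤ (∫ x in (-π)..π, (e x 0) ^ 2)
              * Real.exp (-(2 * Kp - γ * Real.sqrt (∫ x in (-π)..π, (f' x) ^ 2)) * t))
      ∧ Tendsto (fun t => Real.sqrt (∫ x in (-π)..π, (e x t) ^ 2)) atTop (nhds 0) := by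
  have hπ : (-π : ℝ) ≤ π := by have := Real.pi_pos; linarith
  set c := Real.sqrt (∫ x in (-π)..π, (f' x) ^ 2) with hc
  have hcnn : 0 ≤ c := Real.sqrt_nonneg _
  set lam := 2 * Kp - γ * c with hlam
  have hlampos : 0 < lam := by rw [hlam]; linarith [hgain]
  set E : ℝ × ℝ → ℝ := fun p => e p.1 p.2 with hE
  have hec : Continuous E := he_smooth.continuous
  have hEd : Differentiable ℝ E := he_smooth.differentiable one_ne_zero
  set et : ℝ → ℝ → ℝ := fun x t => fderiv ℝ E (x, t) (0, 1) with het
  set ex : ℝ → ℝ → ℝ := fun x t => fderiv ℝ E (x, t) (1, 0) with hex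
  have hasDt : ∀ x t, HasDerivAt (fun s => e x s) (et x t) t := by
    intro x t
    have h1 : HasDerivAt (fun s : ℝ => ((x : ℝ), s)) ((0:ℝ), (1:ℝ)) t :=
      (hasDerivAt_const t x).prodMk (hasDerivAt_id t)
    exact (hEd (x, t)).hasFDerivAt.comp_hasDerivAt t h1
  have hasDx : ∀ x t, HasDerivAt (fun z => e z t) (ex x t) x := by
    intro x t
    have h1 : HasDerivAt (fun z : ℝ => (z, (t : ℝ))) ((1:ℝ), (0:ℝ)) x :=
      (hasDerivAt_id x).prodMk (hasDerivAt_const x t)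
    exact (hEd (x, t)).hasFDerivAt.comp_hasDerivAt x h1
  have hfderivc : Continuous fun p : ℝ × ℝ => fderiv ℝ E p :=
    he_smooth.continuous_fderiv one_ne_zero
  have hetc : Continuous fun p : ℝ × ℝ => et p.1 p.2 := by
    have : Continuous fun p : ℝ × ℝ => fderiv ℝ E p ((0:ℝ), (1:ℝ)) :=
      hfderivc.clm_apply continuous_const
    simpa [het] using this
  have hexc : Continuous fun p : ℝ × ℝ => ex p.1 p.2 := by
    have : Continuous fun p : ℝ × ℝ => fderiv ℝ E p ((1:ℝ), (0:ℝ)) :=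
      hfderivc.clm_apply continuous_const
    simpa [hex] using this
  have hfc : Continuous f := continuous_iff_continuousAt.mpr fun x => (hf' x).continuousAt
  have hslice : ∀ t, Continuous fun y => e y t := fun t =>
    hec.comp (continuous_id.prodMk continuous_const)
  set V : ℝ → ℝ := fun t => ∫ x in (-π)..π, (e x t) ^ 2 with hV
  have hVnn : ∀ t, 0 ≤ V t := fun t =>
    intervalIntegral.integral_nonneg hπ (fun x _ => sq_nonneg _)
  set V' : ℝ → ℝ := fun t => ∫ x in (-π)..π, 2 * e x t * et x t with hV'
  have hVd : ∀ t, HasDerivAt V (V' t) t := by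
    intro t₀
    obtain ⟨M, hM⟩ := (isCompact_Icc.prod isCompact_Icc).exists_bound_of_continuousOn
      (f := fun p : ℝ × ℝ => 2 * e p.1 p.2 * et p.1 p.2)
      (s := Set.Icc (-π) π ×ˢ Set.Icc (t₀ - 1) (t₀ + 1))
      ((continuous_const.mul hec).mul hetc).continuousOn
    have key := intervalIntegral.hasDerivAt_integral_of_dominated_loc_of_deriv_le
      (F := fun t x => (e x t) ^ 2) (F' := fun t x => 2 * e x t * et x t) (x₀ := t₀)
      (a := -π) (b := π) (μ := volume) (bound := fun _ => M) (Metric.ball_mem_nhds t₀ one_pos)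
      (Filter.Eventually.of_forall fun t => ((hslice t).pow 2).aestronglyMeasurable)
      (((hslice t₀).pow 2).intervalIntegrable _ _)
      ((((continuous_const.mul (hslice t₀)).mul
        (hetc.comp (continuous_id.prodMk continuous_const)))).aestronglyMeasurable)
      (Filter.Eventually.of_forall fun x hx t ht => by
        have hx' : x ∈ Set.Icc (-π) π := by
          rcases Set.mem_uIoc.mp hx with h1 | h1
          · exact ⟨h1.1.le, h1.2⟩
          · exact absurd (h1.1.trans_le h1.2) (by linarith)
        have ht' : t ∈ Set.Icc (t₀ - 1) (t₀ + 1) := by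
          have := Metric.mem_ball.mp ht
          rw [Real.dist_eq] at this
          rcases abs_lt.mp this with ⟨h1, h2⟩
          constructor <;> linarith
        exact hM (x, t) ⟨hx', ht'⟩)
      (intervalIntegrable_const)
      (Filter.Eventually.of_forall fun x _ t _ => by
        simpa [mul_comm, mul_assoc, mul_left_comm] using (hasDt x t).fun_pow 2)
    exact key.2
  have hVcont : Continuous V :=
    continuous_iff_continuousAt.mpr fun t => (hVd t).continuousAt
  -- convolution facts
  have hf'per : Function.Periodic f' (2 * π) := deriv_periodic hf' hf_per
  have hVineq : ∀ t, 0 ≤ t → V' t ≤ (-(2 * Kp) + c * Real.sqrt (V t)) * V t := by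
    intro t ht
    set Ve : ℝ → ℝ := circConv f (fun y => e y t) with hVe
    set Ve' : ℝ → ℝ := circConv f' (fun y => e y t) with hVe'
    have hVed : ∀ x, HasDerivAt Ve (Ve' x) x := fun x =>
      circConv_hasDerivAt hf' hf'_cont (hslice t) x
    have hVec : Continuous Ve := circConv_continuous hfc (hslice t)
    have hVe'c : Continuous Ve' := circConv_continuous hf'_cont (hslice t)
    have hVe'bd : ∀ x, |Ve' x| ≤ c * Real.sqrt (V t) := fun x =>
      circConv_bound hf'_cont hf'per (hslice t) x
    have hets : ∀ x, et x t = -Kp * e x t - (ex x t * (-(Ve x)) + e x t * (-(Ve' x))) := by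
      intro x
      have h1 := hpde x t ht
      rw [(hasDt x t).deriv, ((hasDx x t).fun_mul ((hVed x).fun_neg)).deriv] at h1
      linarith
    have hG : ∀ x, HasDerivAt (fun z => (e z t) ^ 2 * Ve z)
        (2 * e x t * ex x t * Ve x + (e x t) ^ 2 * Ve' x) x := by
      intro x
      have h1 : HasDerivAt (fun z => (e z t) ^ 2) (2 * e x t * ex x t) x := by
        simpa [mul_comm, mul_assoc, mul_left_comm] using (hasDx x t).fun_pow 2
      exact h1.mul (hVed x)
    have hGcont : Continuous fun x => 2 * e x t * ex x t * Ve x + (e x t) ^ 2 * Ve' x := by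
      apply Continuous.add
      · exact ((continuous_const.mul (hslice t)).mul
          (hexc.comp (continuous_id.prodMk continuous_const))).mul hVec
      · exact ((hslice t).pow 2).mul hVe'c
    have hFTC : (∫ x in (-π)..π, (2 * e x t * ex x t * Ve x + (e x t) ^ 2 * Ve' x)) = 0 := by
      rw [intervalIntegral.integral_eq_sub_of_hasDerivAt (fun x _ => hG x)
        (hGcont.intervalIntegrable _ _)]
      have he2 : e π t = e (-π) t := by
        have := he_per (-π) t
        rwa [show -π + 2 * π = π by ring] at this
      have hVe2 : Ve π = Ve (-π) := by
        rw [hVe]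
        unfold circConv
        apply intervalIntegral.integral_congr
        intro y _
        show f (π - y) * e y t = f (-π - y) * e y t
        have := hf_per (-π - y)
        rw [show -π - y + 2 * π = π - y by ring] at this
        rw [this]
      rw [he2, hVe2]
      ring
    have hsplit : V' t = -(2 * Kp) * V t
        + ∫ x in (-π)..π, (e x t) ^ 2 * Ve' x := by
      simp only [hV']
      have hptw : ∀ x, 2 * e x t * et x t
          = (-(2 * Kp)) * (e x t) ^ 2
            + ((2 * e x t * ex x t * Ve x + (e x t) ^ 2 * Ve' x) + (e x t) ^ 2 * Ve' x) := by
        intro x; rw [hets x]; ring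
      rw [intervalIntegral.integral_congr (g :=
        fun x => (-(2 * Kp)) * (e x t) ^ 2
          + ((2 * e x t * ex x t * Ve x + (e x t) ^ 2 * Ve' x) + (e x t) ^ 2 * Ve' x))
        (fun x _ => hptw x)]
      rw [intervalIntegral.integral_add, intervalIntegral.integral_add,
        intervalIntegral.integral_const_mul, hFTC]
      · simp only [hV]; ring
      · exact hGcont.intervalIntegrable _ _
      · exact (((hslice t).pow 2).mul hVe'c).intervalIntegrable _ _
      · exact (continuous_const.mul ((hslice t).pow 2)).intervalIntegrable _ _
      · exact (hGcont.add (((hslice t).pow 2).mul hVe'c)).intervalIntegrable _ _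
    have hbd : (∫ x in (-π)..π, (e x t) ^ 2 * Ve' x)
        ≤ (c * Real.sqrt (V t)) * V t := by
      have h1 : (∫ x in (-π)..π, (e x t) ^ 2 * Ve' x)
          ≤ ∫ x in (-π)..π, (e x t) ^ 2 * (c * Real.sqrt (V t)) := by
        apply intervalIntegral.integral_mono_on hπ
          ((((hslice t).pow 2).mul hVe'c).intervalIntegrable _ _)
          ((((hslice t).pow 2).mul continuous_const).intervalIntegrable _ _)
        intro x _
        exact mul_le_mul_of_nonneg_left ((le_abs_self _).trans (hVe'bd x)) (sq_nonneg _)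
      calc (∫ x in (-π)..π, (e x t) ^ 2 * Ve' x)
          ≤ ∫ x in (-π)..π, (e x t) ^ 2 * (c * Real.sqrt (V t)) := h1
        _ = (c * Real.sqrt (V t)) * V t := by
            rw [intervalIntegral.integral_mul_const]; simp only [hV]; ring
    rw [hsplit]; ring_nf; ring_nf at hbd; linarith
  have hV0 : V 0 < γ ^ 2 := by
    have h1 : Real.sqrt (V 0) < γ := hinit
    nlinarith [Real.sq_sqrt (hVnn 0), Real.sqrt_nonneg (V 0)]
  have hstay : ∀ t, 0 ≤ t → V t < γ ^ 2 := by
    by_contra hcon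
    push_neg at hcon
    obtain ⟨t₂, ht₂0, ht₂⟩ := hcon
    set B : Set ℝ := {t | 0 ≤ t ∧ γ ^ 2 ≤ V t} with hB
    have hBne : B.Nonempty := ⟨t₂, ht₂0, ht₂⟩
    have hBbdd : BddBelow B := ⟨0, fun s hs => hs.1⟩
    have hBclosed : IsClosed B := by
      have : B = Set.Ici 0 ∩ V ⁻¹' Set.Ici (γ ^ 2) := rfl
      rw [this]
      exact isClosed_Ici.inter (isClosed_Ici.preimage hVcont)
    set t₁ := sInf B with ht₁
    have ht₁B : t₁ ∈ B := hBclosed.csInf_mem hBne hBbdd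
    have ht₁pos : 0 < t₁ := by
      rcases lt_or_eq_of_le ht₁B.1 with h | h
      · exact h
      · exfalso; have := ht₁B.2; rw [← h] at this; linarith
    have hlt : ∀ s, 0 < s → s < t₁ → V s < γ ^ 2 := by
      intro s hs hst
      by_contra h'
      push_neg at h'
      exact absurd (csInf_le hBbdd ⟨hs.le, h'⟩) (not_le.mpr hst)
    have hmono : AntitoneOn V (Set.Icc 0 t₁) := by
      apply antitoneOn_of_deriv_nonpos (convex_Icc 0 t₁) hVcont.continuousOn
        (fun s _ => (hVd s).differentiableAt.differentiableWithinAt)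
      intro s hs
      rw [interior_Icc] at hs
      rw [(hVd s).deriv]
      have h1 := hVineq s hs.1.le
      have h2 : Real.sqrt (V s) < γ := by
        have h3 := hlt s hs.1 hs.2
        have h4 : Real.sqrt (V s) < Real.sqrt (γ ^ 2) := by
          apply Real.sqrt_lt_sqrt (hVnn s) h3
        rwa [Real.sqrt_sq hγ.le] at h4
      have h5 : c * Real.sqrt (V s) ≤ c * γ := by
        apply mul_le_mul_of_nonneg_left h2.le hcnn
      have h6 : c * γ < 2 * Kp := by rw [mul_comm]; exact hgain
      nlinarith [hVnn s]
    have hle : V t₁ ≤ V 0 :=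
      hmono ⟨le_refl 0, ht₁pos.le⟩ ⟨ht₁pos.le, le_refl t₁⟩ ht₁pos.le
    linarith [ht₁B.2]
  have hVineq2 : ∀ t, 0 ≤ t → V' t ≤ -lam * V t := by
    intro t ht
    have h1 := hVineq t ht
    have h2 : Real.sqrt (V t) ≤ γ := by
      have h3 := hstay t ht
      have h4 : Real.sqrt (V t) < Real.sqrt (γ ^ 2) := Real.sqrt_lt_sqrt (hVnn t) h3
      rw [Real.sqrt_sq hγ.le] at h4
      exact h4.le
    have h5 : c * Real.sqrt (V t) ≤ c * γ := mul_le_mul_of_nonneg_left h2 hcnn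
    have h6 : -(2 * Kp) + c * Real.sqrt (V t) ≤ -lam := by
      rw [hlam]; rw [mul_comm c γ] at h5; linarith
    calc V' t ≤ (-(2 * Kp) + c * Real.sqrt (V t)) * V t := h1
      _ ≤ -lam * V t := mul_le_mul_of_nonneg_right h6 (hVnn t)
  have hdecay : ∀ t, 0 ≤ t → V t ≤ V 0 * Real.exp (-lam * t) := by
    have hexpd : ∀ t : ℝ, HasDerivAt (fun s => Real.exp (lam * s))
        (lam * Real.exp (lam * t)) t := by
      intro t
      have h1 : HasDerivAt (fun s : ℝ => lam * s) lam t := by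
        simpa using (hasDerivAt_id t).const_mul lam
      simpa [mul_comm] using h1.exp
    have hgd : ∀ t, HasDerivAt (fun u => V u * Real.exp (lam * u))
        (V' t * Real.exp (lam * t) + V t * (lam * Real.exp (lam * t))) t :=
      fun t => (hVd t).mul (hexpd t)
    have hganti : AntitoneOn (fun u => V u * Real.exp (lam * u)) (Set.Ici 0) := by
      apply antitoneOn_of_deriv_nonpos (convex_Ici 0)
        (show Continuous fun u => V u * Real.exp (lam * u) by
          exact hVcont.mul (Real.continuous_exp.comp (continuous_const.mul continuous_id))).continuousOn
        (fun s _ => (hgd s).differentiableAt.differentiableWithinAt)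
      intro s hs
      rw [interior_Ici] at hs
      have hd : deriv (fun u => V u * Real.exp (lam * u)) s
          = V' s * Real.exp (lam * s) + V s * (lam * Real.exp (lam * s)) := (hgd s).deriv
      rw [hd]
      have h1 := hVineq2 s hs.le
      have h2 := Real.exp_pos (lam * s)
      nlinarith [hVnn s]
    intro t ht
    have h1 : V t * Real.exp (lam * t) ≤ V 0 * Real.exp (lam * 0) :=
      hganti Set.self_mem_Ici ht ht
    have h3 : V t * Real.exp (lam * t) ≤ V 0 := by simpa using h1
    have h4 : Real.exp (-lam * t) = (Real.exp (lam * t))⁻¹ := by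
      rw [← Real.exp_neg]; ring_nf
    rw [h4, ← div_eq_mul_inv, le_div_iff₀ (Real.exp_pos _)]
    exact h3
  constructor
  · intro t ht
    exact hdecay t ht
  · have h0 : Tendsto (fun t : ℝ => V 0 * Real.exp (-lam * t)) atTop (nhds 0) := by
      have h1 : Tendsto (fun t : ℝ => -lam * t) atTop atBot :=
        (tendsto_const_mul_atBot_of_neg (by linarith)).mpr tendsto_id
      have h2 := Real.tendsto_exp_atBot.comp h1
      simpa using h2.const_mul (V 0)
    have hsq : Tendsto (fun t : ℝ => Real.sqrt (V 0 * Real.exp (-lam * t))) atTop (nhds 0) := by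
      have := (Real.continuous_sqrt.tendsto 0).comp h0
      simpa [Function.comp_def] using this
    apply squeeze_zero' (Filter.Eventually.of_forall fun t => Real.sqrt_nonneg _) ?_ hsq
    filter_upwards [eventually_ge_atTop (0:ℝ)] with t ht
    exact Real.sqrt_le_sqrt (hdecay t ht)
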